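/- Let g be a g-metric with order n on a nonempty set Ω. Then for all x₀, x₁, …, xₙ, w ∈ Ω: g(x₀, x₁, …, xₙ) ≤ Σ_{i=0}^{n} g(xᵢ, w, …, w), where in each summand w is repeated n times. -/

import Mathlib

open scoped Classical

/-- A *g-metric with order `n`* on `Ω`: a nonnegative real-valued function of `n+1` points
satisfying positive definiteness, permutation invariance, monotonicity, and the
generalized triangle inequality. -/
structure IsGMetric {Ω : Type*} (n : ℕ) (g : (Fin (n + 1) → Ω) → ℝ) : Prop where
  nonneg : ∀ x, 0 ≤ g x
  eq_zero_iff : ∀ x, g x = 0 ↔ ∀ i j, x i = x j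
  perm_inv : ∀ (x : Fin (n + 1) → Ω) (σ : Equiv.Perm (Fin (n + 1))), g (x ∘ σ) = g x
  mono : ∀ x y : Fin (n + 1) → Ω, Set.range x ⊂ Set.range y → g x ≤ g y
  triangle : ∀ s : ℕ, s < n → ∀ (x y : Fin (n + 1) → Ω) (w : Ω),
    g (fun i => if i.val ≤ s then x i else y i) ≤
      g (fun i => if i.val ≤ s then x i else w) + g (fun i => if i.val ≤ s then w else y i)

lemma gMetric_single {Ω : Type*} {n : ℕ}
    (g : (Fin (n + 1) → Ω) → ℝ) (hg : IsGMetric n g)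
    (x : Fin (n + 1) → Ω) (w : Ω) (k : Fin (n + 1)) :
    g (fun i => if i = k then x i else w) =
      g (fun j => if j.val = 0 then x k else w) := by
  have := hg.perm_inv (fun j => if j.val = 0 then x k else w) (Equiv.swap 0 k)
  rw [← this]
  congr 1
  funext i
  simp only [Function.comp]
  by_cases h0 : i = 0
  · subst h0
    by_cases hk : (0 : Fin (n+1)) = k
    · simp [hk.symm, Equiv.swap_apply_left, ← hk]
    · have : Equiv.swap (0 : Fin (n+1)) k 0 = k := Equiv.swap_apply_left 0 k
      rw [this]
      have hk0 : k.val ≠ 0 := fun h => hk (Fin.ext h.symm)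
      simp [hk, hk0, Ne.symm hk]
  · by_cases hk : i = k
    · subst hk
      have : Equiv.swap (0 : Fin (n+1)) i i = 0 := Equiv.swap_apply_right 0 i
      simp [this]
    · have : Equiv.swap (0 : Fin (n+1)) k i = i := Equiv.swap_apply_of_ne_of_ne h0 hk
      rw [this]
      have : i.val ≠ 0 := fun h => h0 (Fin.ext h)
      simp [hk, this]

/-- Basic property (4): `g(x₀,…,xₙ) ≤ Σᵢ g(xᵢ, w, …, w)`. -/
theorem gMetric_le_sum {Ω : Type*} [Nonempty Ω] {n : ℕ} (hn : 1 ≤ n)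
    (g : (Fin (n + 1) → Ω) → ℝ) (hg : IsGMetric n g)
    (x : Fin (n + 1) → Ω) (w : Ω) :
    g x ≤ ∑ i : Fin (n + 1), g (fun j => if j.val = 0 then x i else w) := by
  have key : ∀ k, k ≤ n →
      g (fun i => if i.val ≤ k then x i else w) ≤
        ∑ i ∈ Finset.univ.filter (fun i : Fin (n+1) => i.val ≤ k),
          g (fun j => if j.val = 0 then x i else w) := by
    intro k
    induction k with
    | zero =>
      intro _
      have hfil : Finset.univ.filter (fun i : Fin (n+1) => i.val ≤ 0) = {0} := by
        ext i
        simp only [Finset.mem_filter, Finset.mem_univ, true_and, Finset.mem_singleton, Fin.ext_iff, Fin.val_zero]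
        omega
      rw [hfil, Finset.sum_singleton]
      have : (fun i : Fin (n+1) => if i.val ≤ 0 then x i else w) =
          (fun j : Fin (n+1) => if j.val = 0 then x 0 else w) := by
        funext i
        by_cases h : i.val = 0
        · have : i = 0 := Fin.ext h
          simp [this]
        · simp [h, Nat.le_zero, fun hh => h hh]
      rw [this]
    | succ k ih =>
      intro hk1
      have hk : k < n := lt_of_lt_of_le (Nat.lt_succ_self k) hk1
      have hkn1 : k + 1 < n + 1 := Nat.succ_lt_succ hk
      set K : Fin (n+1) := ⟨k+1, hkn1⟩ with hK
      have htri := hg.triangle k hk x (fun i => if i.val ≤ k + 1 then x i else w) w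
      have hL : (fun i : Fin (n+1) => if i.val ≤ k then x i
            else if i.val ≤ k + 1 then x i else w)
          = (fun i : Fin (n+1) => if i.val ≤ k + 1 then x i else w) := by
        funext i; split_ifs <;> first | rfl | omega
      have hR : (fun i : Fin (n+1) => if i.val ≤ k then w
            else if i.val ≤ k + 1 then x i else w)
          = (fun i : Fin (n+1) => if i = K then x i else w) := by
        funext i
        by_cases h : i = K
        · subst h
          simp [hK]
        · have hv : i.val ≠ k + 1 := fun hh => h (Fin.ext hh)
          by_cases h2 : i.val ≤ k
          · simp [h2, h]
          · have h3 : ¬ i.val ≤ k + 1 := by omega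
            simp [h2, h3, h]
      rw [hL, hR, gMetric_single g hg x w K] at htri
      have hins : Finset.univ.filter (fun i : Fin (n+1) => i.val ≤ k + 1)
          = insert K (Finset.univ.filter (fun i : Fin (n+1) => i.val ≤ k)) := by
        ext i
        simp [hK, Fin.ext_iff]
        omega
      have hnotmem : K ∉ Finset.univ.filter (fun i : Fin (n+1) => i.val ≤ k) := by
        simp [hK]
      rw [hins, Finset.sum_insert hnotmem]
      calc g (fun i : Fin (n+1) => if i.val ≤ k + 1 then x i else w)
          ≤ g (fun i : Fin (n+1) => if i.val ≤ k then x i else w)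
            + g (fun j : Fin (n+1) => if j.val = 0 then x K else w) := htri
        _ ≤ (∑ i ∈ Finset.univ.filter (fun i : Fin (n+1) => i.val ≤ k),
              g (fun j => if j.val = 0 then x i else w))
            + g (fun j : Fin (n+1) => if j.val = 0 then x K else w) :=
            add_le_add_left (ih (le_of_lt hk)) _
        _ = _ := add_comm _ _
  have hx : x = (fun i : Fin (n+1) => if i.val ≤ n then x i else w) := by
    funext i; simp [Nat.lt_succ_iff.mp i.isLt]
  have hfil : Finset.univ.filter (fun i : Fin (n+1) => i.val ≤ n) = Finset.univ := by
    ext i; simp [Nat.lt_succ_iff.mp i.isLt]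
  calc g x = g (fun i : Fin (n+1) => if i.val ≤ n then x i else w) := by rw [← hx]
    _ ≤ _ := key n le_rfl
    _ = _ := by rw [hfil]
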